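/- (Menu monotonicity) Let (f, p₁,…,pₙ) be a truthful n-bidder auction rule over valuation classes V₁,…,Vₙ, where every valuation in every V_i is normalized and monotone. Then there exist payment functions p'₁,…,p'ₙ such that (f, p'₁,…,p'ₙ) is truthful and, for every bidder i and every profile v_{-i}, there is a function M : Finset (Fin m) → ℝ that is nondecreasing (M(S) ≤ M(T) whenever S ⊆ T), satisfies M(∅) = 0, and satisfies p'_i(v_i, v_{-i}) = M(f_i(v_i, v_{-i})) for every v_i ∈ V_i. -/
import Mathlib


/-- **Menu monotonicity.** For any truthful `n`-bidder auction rule `(f, p)` over classes of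
normalized monotone valuations, there exist payments `p'` such that `(f, p')` is truthful
and, for every bidder `i` and every profile of the other bidders' valuations, the payments
of bidder `i` are given by a nondecreasing normalized menu of the allocated bundle. -/
theorem menu_monotonicity
    (m n : ℕ) (V : Fin n → Set (Finset (Fin m) → ℝ))
    (hV : ∀ i : Fin n, ∀ v ∈ V i,
      v ∅ = 0 ∧ ∀ S T : Finset (Fin m), S ⊆ T → v S ≤ v T)
    (f : (Fin n → Finset (Fin m) → ℝ) → Fin n → Finset (Fin m))
    (p : Fin n → (Fin n → Finset (Fin m) → ℝ) → ℝ)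
    (hdisj : ∀ v : Fin n → Finset (Fin m) → ℝ, (∀ j, v j ∈ V j) →
      ∀ i j : Fin n, i ≠ j → Disjoint (f v i) (f v j))
    (htruth : ∀ v : Fin n → Finset (Fin m) → ℝ, (∀ j, v j ∈ V j) →
      ∀ i : Fin n, ∀ v' ∈ V i,
        v i (f v i) - p i v ≥
          v i (f (Function.update v i v') i) - p i (Function.update v i v')) :
    ∃ p' : Fin n → (Fin n → Finset (Fin m) → ℝ) → ℝ,
      (∀ v : Fin n → Finset (Fin m) → ℝ, (∀ j, v j ∈ V j) →
        ∀ i : Fin n, ∀ v' ∈ V i,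
          v i (f v i) - p' i v ≥
            v i (f (Function.update v i v') i) - p' i (Function.update v i v')) ∧
      (∀ i : Fin n, ∀ v : Fin n → Finset (Fin m) → ℝ, (∀ j, v j ∈ V j) →
        ∃ M : Finset (Fin m) → ℝ,
          (∀ S T : Finset (Fin m), S ⊆ T → M S ≤ M T) ∧ M ∅ = 0 ∧
          ∀ vi' ∈ V i,
            p' i (Function.update v i vi') = M (f (Function.update v i vi') i)) := by
  classical
  -- validity of updated profiles
  have hupd : ∀ (i : Fin n) (v : Fin n → Finset (Fin m) → ℝ), (∀ j, v j ∈ V j) →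
      ∀ w ∈ V i, ∀ j, Function.update v i w j ∈ V j := by
    intro i v hv w hw j
    rcases eq_or_ne j i with rfl | h
    · simpa using hw
    · simpa [Function.update_of_ne h] using hv j
  -- key monotonicity: larger obtained bundle means larger payment
  have key : ∀ (i : Fin n) (v : Fin n → Finset (Fin m) → ℝ), (∀ j, v j ∈ V j) →
      ∀ w ∈ V i, ∀ w' ∈ V i,
        f (Function.update v i w) i ⊆ f (Function.update v i w') i →
        p i (Function.update v i w) ≤ p i (Function.update v i w') := by
    intro i v hv w hw w' hw' hsub
    have h := htruth (Function.update v i w) (hupd i v hv w hw) i w' hw'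
    rw [Function.update_idem] at h
    simp only [Function.update_self] at h
    have hmono := (hV i w hw).2 _ _ hsub
    linarith
  -- the set of payments of bidder i over all reports
  set P : Fin n → (Fin n → Finset (Fin m) → ℝ) → Set ℝ :=
    fun i v => (fun w => p i (Function.update v i w)) '' V i with hP
  have hPfin : ∀ (i : Fin n) (v : Fin n → Finset (Fin m) → ℝ), (∀ j, v j ∈ V j) →
      (P i v).Finite := by
    intro i v hv
    apply Set.Finite.subset (Set.finite_range (fun S : Finset (Fin m) =>
      sSup ((fun w => p i (Function.update v i w)) ''
        {w ∈ V i | f (Function.update v i w) i = S})))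
    rintro x ⟨w, hw, rfl⟩
    refine ⟨f (Function.update v i w) i, ?_⟩
    have hset : ((fun w' => p i (Function.update v i w')) ''
        {w' ∈ V i | f (Function.update v i w') i = f (Function.update v i w) i})
        = {p i (Function.update v i w)} := by
      apply Set.eq_singleton_iff_unique_mem.mpr
      refine ⟨⟨w, ⟨hw, rfl⟩, rfl⟩, ?_⟩
      rintro x ⟨w', ⟨hw', heq⟩, rfl⟩
      exact le_antisymm (key i v hv w' hw' w hw (heq ▸ subset_rfl))
        (key i v hv w hw w' hw' (heq ▸ subset_rfl))
    simp only [hset, csSup_singleton]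
  have hPne : ∀ (i : Fin n) (v : Fin n → Finset (Fin m) → ℝ), (∀ j, v j ∈ V j) →
      (P i v).Nonempty := by
    intro i v hv
    exact ⟨p i (Function.update v i (v i)), ⟨v i, hv i, rfl⟩⟩
  -- the P-set only depends on v off coordinate i
  have hPinv : ∀ (i : Fin n) (v : Fin n → Finset (Fin m) → ℝ) (w : Finset (Fin m) → ℝ),
      P i (Function.update v i w) = P i v := by
    intro i v w
    simp [hP, Function.update_idem]
  refine ⟨fun i v => p i v - sInf (P i v), ?_, ?_⟩
  · -- truthfulness of p'
    intro v hv i v' hv'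
    have h := htruth v hv i v' hv'
    dsimp only
    rw [hPinv]
    linarith
  · -- menu representation
    intro i v hv
    set c : ℝ := sInf (P i v) with hc
    have hbdd : BddBelow (P i v) := (hPfin i v hv).bddBelow
    have hc_le : ∀ w ∈ V i, c ≤ p i (Function.update v i w) := by
      intro w hw
      exact csInf_le hbdd ⟨w, hw, rfl⟩
    -- the menu
    set M : Finset (Fin m) → ℝ := fun S =>
      sSup ({0} ∪ ((fun w => p i (Function.update v i w) - c) ''
        {w ∈ V i | f (Function.update v i w) i ⊆ S})) with hM
    have hMfin : ∀ S, ({(0 : ℝ)} ∪ ((fun w => p i (Function.update v i w) - c) ''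
        {w ∈ V i | f (Function.update v i w) i ⊆ S})).Finite := by
      intro S
      apply Set.Finite.union (Set.finite_singleton 0)
      apply Set.Finite.subset (((hPfin i v hv).image (fun x => x - c)))
      rintro x ⟨w, ⟨hw, -⟩, rfl⟩
      exact ⟨p i (Function.update v i w), ⟨w, hw, rfl⟩, rfl⟩
    have hMbdd : ∀ S, BddAbove ({(0 : ℝ)} ∪ ((fun w => p i (Function.update v i w) - c) ''
        {w ∈ V i | f (Function.update v i w) i ⊆ S})) := fun S => (hMfin S).bddAbove
    have hMne : ∀ S, ({(0 : ℝ)} ∪ ((fun w => p i (Function.update v i w) - c) ''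
        {w ∈ V i | f (Function.update v i w) i ⊆ S})).Nonempty :=
      fun S => ⟨0, Or.inl rfl⟩
    refine ⟨M, ?_, ?_, ?_⟩
    · -- monotone
      intro S T hST
      apply csSup_le_csSup (hMbdd T) (hMne S)
      rintro x (hx | ⟨w, ⟨hw, hsub⟩, rfl⟩)
      · exact Or.inl hx
      · exact Or.inr ⟨w, ⟨hw, hsub.trans hST⟩, rfl⟩
    · -- normalized
      apply le_antisymm
      · apply csSup_le (hMne ∅)
        rintro x (hx | ⟨w, ⟨hw, hsub⟩, rfl⟩)
        · simp only [Set.mem_singleton_iff] at hx; simp [hx]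
        · have : p i (Function.update v i w) ≤ c := by
            apply le_csInf (hPne i v hv)
            rintro x ⟨w', hw', rfl⟩
            exact key i v hv w hw w' hw' (hsub.trans (Finset.empty_subset _))
          dsimp only
          linarith
      · exact le_csSup (hMbdd ∅) (Or.inl rfl)
    · -- payment equals menu at allocated bundle
      intro vi' hvi'
      have hcinv : sInf (P i (Function.update v i vi')) = c := by rw [hPinv]
      have hval : M (f (Function.update v i vi') i) = p i (Function.update v i vi') - c := by
        apply le_antisymm
        · apply csSup_le (hMne _)
          rintro x (hx | ⟨w, ⟨hw, hsub⟩, rfl⟩)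
          · simp only [Set.mem_singleton_iff] at hx
            subst hx
            have := hc_le vi' hvi'
            linarith
          · have := key i v hv w hw vi' hvi' hsub
            dsimp only
            linarith
        · exact le_csSup (hMbdd _) (Or.inr ⟨vi', ⟨hvi', subset_rfl⟩, rfl⟩)
      simp only [hcinv, hval]
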